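/- (Ziegler) Let 1 ≤ d ≤ n. A set I of (d+1)-element subsets of [n] is the inversion set Inv(≺) of some admissible linear order ≺ on the d-element subsets of [n] if and only if I is consistent, i.e. for every (d+2)-element subset 𝐢 of [n] the intersection I ∩ P(𝐢) is a beginning or an ending interval of the packet P(𝐢). -/

import Mathlib

/-- `hat s t` is `𝐬̂_t`: the finset `s` with its `t`-th smallest element removed (`t` is
1-indexed); for `s = {i_1 < ⋯ < i_c}`, `hat s t = s \ {i_t}`. -/
def hat (s : Finset ℕ) (t : ℕ) : Finset ℕ :=
  s.erase ((s.sort (· ≤ ·)).getD (t - 1) 0)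

/-- Ziegler's consistency condition for a set `I` of `(d+1)`-element subsets of `[N]`:
for every `(d+2)`-element subset `s ⊆ [N]`, the intersection `I ∩ P(s)` with the packet
`P(s) = (ŝ_{d+2}, …, ŝ_1)` is a beginning interval `{ŝ_{d+2}, …, ŝ_k}` or an ending
interval `{ŝ_k, …, ŝ_1}` of `P(s)`. -/
def IsConsistent (N d : ℕ) (I : Set (Finset ℕ)) : Prop :=
  ∀ s : Finset ℕ, s ⊆ Finset.Icc 1 N → s.card = d + 2 →
    ∃ k ≤ d + 2,
      (∀ t, 1 ≤ t → t ≤ d + 2 → (hat s t ∈ I ↔ t ≤ k)) ∨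
      (∀ t, 1 ≤ t → t ≤ d + 2 → (hat s t ∈ I ↔ k ≤ t))

/-- `r` is a (strict) linear order on the set `A`. -/
def IsLinOrderOn (A : Set (Finset ℕ)) (r : Finset ℕ → Finset ℕ → Prop) : Prop :=
  (∀ a ∈ A, ¬ r a a) ∧
  (∀ a ∈ A, ∀ b ∈ A, ∀ c ∈ A, r a b → r b c → r a c) ∧
  (∀ a ∈ A, ∀ b ∈ A, a ≠ b → r a b ∨ r b a)

/-- The packet of the `(d+1)`-subset `s` is ordered lexicographically by `r`:
`ŝ_{d+1} ≺ ŝ_d ≺ ⋯ ≺ ŝ_1`. -/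
def PacketLex (d : ℕ) (r : Finset ℕ → Finset ℕ → Prop) (s : Finset ℕ) : Prop :=
  ∀ t t' : ℕ, 1 ≤ t → t < t' → t' ≤ d + 1 → r (hat s t') (hat s t)

/-- The packet of the `(d+1)`-subset `s` is ordered antilexicographically by `r`:
`ŝ_{d+1} ≻ ŝ_d ≻ ⋯ ≻ ŝ_1`. -/
def PacketAntilex (d : ℕ) (r : Finset ℕ → Finset ℕ → Prop) (s : Finset ℕ) : Prop :=
  ∀ t t' : ℕ, 1 ≤ t → t < t' → t' ≤ d + 1 → r (hat s t) (hat s t')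

/-- `r` is an admissible linear order on the `d`-element subsets of `[n]`: a linear order
whose restriction to every packet `P(𝐢)`, `𝐢` a `(d+1)`-subset of `[n]`, is
lexicographic or antilexicographic. -/
def IsAdmissible (n d : ℕ) (r : Finset ℕ → Finset ℕ → Prop) : Prop :=
  IsLinOrderOn {s | s ⊆ Finset.Icc 1 n ∧ s.card = d} r ∧
  ∀ s : Finset ℕ, s ⊆ Finset.Icc 1 n → s.card = d + 1 →
    PacketLex d r s ∨ PacketAntilex d r s

/-- The inversion set of an admissible order `r`: the set of `(d+1)`-subsets of `[n]`
whose packet is ordered antilexicographically. -/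
def invOrder (n d : ℕ) (r : Finset ℕ → Finset ℕ → Prop) : Set (Finset ℕ) :=
  {s | s ⊆ Finset.Icc 1 n ∧ s.card = d + 1 ∧ PacketAntilex d r s}

namespace Zaux

/-- the `t`-th smallest element of `s` (1-indexed). -/
def nth (s : Finset ℕ) (t : ℕ) : ℕ := (s.sort (· ≤ ·)).getD (t - 1) 0

lemma hat_eq (s : Finset ℕ) (t : ℕ) : hat s t = s.erase (nth s t) := rfl

lemma nth_mem {s : Finset ℕ} {t : ℕ} (h1 : 1 ≤ t) (h2 : t ≤ s.card) : nth s t ∈ s := by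
  have hlen : t - 1 < (s.sort (· ≤ ·)).length := by rw [Finset.length_sort]; omega
  rw [nth, List.getD_eq_getElem _ _ hlen]
  exact (Finset.mem_sort _).1 (List.getElem_mem hlen)

lemma nth_lt_nth {s : Finset ℕ} {t t' : ℕ} (h1 : 1 ≤ t) (h : t < t') (h2 : t' ≤ s.card) :
    nth s t < nth s t' := by
  have hlen' : t' - 1 < (s.sort (· ≤ ·)).length := by rw [Finset.length_sort]; omega
  have hlen : t - 1 < (s.sort (· ≤ ·)).length := by omega
  rw [nth, nth, List.getD_eq_getElem _ _ hlen, List.getD_eq_getElem _ _ hlen']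
  have := (Finset.sortedLT_sort s).strictMono_get
    (a := ⟨t - 1, hlen⟩) (b := ⟨t' - 1, hlen'⟩) (by simp only [Fin.mk_lt_mk]; omega)
  simpa using this

lemma exists_nth_eq {s : Finset ℕ} {x : ℕ} (hx : x ∈ s) :
    ∃ t, 1 ≤ t ∧ t ≤ s.card ∧ nth s t = x := by
  have : x ∈ s.sort (· ≤ ·) := (Finset.mem_sort _).2 hx
  obtain ⟨i, hi, hval⟩ := List.mem_iff_getElem.1 this
  refine ⟨i + 1, by omega, by rw [Finset.length_sort] at hi; omega, ?_⟩
  rw [nth, Nat.add_sub_cancel, List.getD_eq_getElem _ _ hi, hval]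

lemma rank_lt {s : Finset ℕ} {t t' : ℕ} (h1 : 1 ≤ t) (h2 : t ≤ s.card)
    (h1' : 1 ≤ t') (h2' : t' ≤ s.card) (hv : nth s t < nth s t') : t < t' := by
  rcases lt_trichotomy t t' with h | h | h
  · exact h
  · subst h; omega
  · exact absurd (nth_lt_nth h1' h h2) (by omega)

lemma sort_insert_max {s : Finset ℕ} {M : ℕ} (h : ∀ x ∈ s, x < M) :
    (insert M s).sort (· ≤ ·) = s.sort (· ≤ ·) ++ [M] := by
  have hM : M ∉ s := fun hm => lt_irrefl M (h M hm)
  have hperm : List.Perm ((insert M s).sort (· ≤ ·)) (s.sort (· ≤ ·) ++ [M]) :=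
    ((Finset.sort_perm_toList _ _).trans
      ((Finset.toList_insert hM).trans
        (List.Perm.cons _ (Finset.sort_perm_toList s (· ≤ ·)).symm))).trans
      (List.perm_append_comm (l₁ := [M]))
  have hsorted : List.Pairwise (· ≤ ·) (s.sort (· ≤ ·) ++ [M]) := by
    refine List.pairwise_append.2 ⟨Finset.pairwise_sort _ _, List.pairwise_singleton _ _, ?_⟩
    intro a ha b hb
    rw [List.mem_singleton] at hb
    subst hb
    exact le_of_lt (h a ((Finset.mem_sort _).1 ha))
  exact List.Perm.eq_of_pairwise' (Finset.pairwise_sort _ _) hsorted hperm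

lemma nth_insert_max {s : Finset ℕ} {M t : ℕ} (h : ∀ x ∈ s, x < M)
    (h1 : 1 ≤ t) (h2 : t ≤ s.card) : nth (insert M s) t = nth s t := by
  have hlen : t - 1 < (s.sort (· ≤ ·)).length := by rw [Finset.length_sort]; omega
  rw [nth, nth, sort_insert_max h, List.getD_append _ _ _ _ hlen]

lemma eq_erase_of {A K : Finset ℕ} {x : ℕ} (hsub : A ⊆ K) (hc : K.card = A.card + 1)
    (hx : x ∈ K) (hnx : x ∉ A) : A = K.erase x := by
  apply Finset.eq_of_subset_of_card_le
  · intro a ha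
    exact Finset.mem_erase.2 ⟨fun he => hnx (he ▸ ha), hsub ha⟩
  · rw [Finset.card_erase_of_mem hx]; omega

lemma erase_erase_comm (s : Finset ℕ) (a b : ℕ) :
    (s.erase a).erase b = (s.erase b).erase a := by
  ext x; simp only [Finset.mem_erase]; tauto

end Zaux

namespace Zaux

/-- contraction of `U` at `M`. -/
def Ctr (U : Set (Finset ℕ)) (M : ℕ) : Set (Finset ℕ) := {T | insert M T ∈ U}

/-- The digraph on `d`-subsets of `[N]` determined by `U`. -/
def EdgeN (N d : ℕ) (U : Set (Finset ℕ)) (A B : Finset ℕ) : Prop :=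
  A.card = d ∧ B.card = d ∧ A ∪ B ⊆ Finset.Icc 1 N ∧ (A ∪ B).card = d + 1 ∧
  ∃ α β : ℕ, A \ B = {α} ∧ B \ A = {β} ∧ (A ∪ B ∈ U ↔ β < α)

lemma edge_ne {N d : ℕ} {U : Set (Finset ℕ)} {A B : Finset ℕ}
    (h : EdgeN N d U A B) : A ≠ B := by
  obtain ⟨-, -, -, -, α, β, hα, -, -⟩ := h
  intro he
  rw [he, Finset.sdiff_self] at hα
  exact absurd hα.symm (Finset.singleton_ne_empty α)

lemma edge_packet_iff {N d : ℕ} {U : Set (Finset ℕ)} {K : Finset ℕ} {x y : ℕ}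
    (hK : K ⊆ Finset.Icc 1 N) (hcard : K.card = d + 1) (hx : x ∈ K) (hy : y ∈ K)
    (hxy : x ≠ y) :
    EdgeN N d U (K.erase x) (K.erase y) ↔ (K ∈ U ↔ x < y) := by
  have hyx : y ≠ x := Ne.symm hxy
  have hAB : K.erase x ∪ K.erase y = K := by
    ext a
    simp only [Finset.mem_union, Finset.mem_erase]
    constructor
    · rintro (⟨-, h⟩ | ⟨-, h⟩) <;> exact h
    · intro ha
      by_cases hax : a = x
      · exact Or.inr ⟨hax ▸ hxy, ha⟩
      · exact Or.inl ⟨hax, ha⟩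
  have hdx : K.erase x \ K.erase y = {y} := by
    ext a
    simp only [Finset.mem_sdiff, Finset.mem_erase, Finset.mem_singleton, not_and]
    constructor
    · rintro ⟨⟨hax, haK⟩, h2⟩
      by_contra hay
      exact hay (h2 (fun hae => hay hae) haK).elim
    · rintro rfl
      exact ⟨⟨hyx, hy⟩, fun h _ => absurd rfl h⟩
  have hdy : K.erase y \ K.erase x = {x} := by
    ext a
    simp only [Finset.mem_sdiff, Finset.mem_erase, Finset.mem_singleton, not_and]
    constructor
    · rintro ⟨⟨hax, haK⟩, h2⟩
      by_contra hay
      exact hay (h2 (fun hae => hay hae) haK).elim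
    · rintro rfl
      exact ⟨⟨hxy, hx⟩, fun h _ => absurd rfl h⟩
  constructor
  · rintro ⟨-, -, -, -, α, β, hα, hβ, hor⟩
    rw [hdx] at hα
    rw [hdy] at hβ
    have hαy : α = y := Finset.singleton_injective hα.symm
    have hβx : β = x := Finset.singleton_injective hβ.symm
    rw [hAB, hβx, hαy] at hor
    exact hor
  · intro hor
    refine ⟨?_, ?_, ?_, ?_, y, x, hdx, hdy, ?_⟩
    · rw [Finset.card_erase_of_mem hx, hcard]; omega
    · rw [Finset.card_erase_of_mem hy, hcard]; omega
    · rw [hAB]; exact hK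
    · rw [hAB]; exact hcard
    · rw [hAB]; exact hor

/-- From consistency: the indicator `x ↦ (W.erase x ∈ U)` has no 101 and no 010
patterns with increasing `x` in `W`. -/
lemma no_pattern {N d : ℕ} {U : Set (Finset ℕ)} (hU : IsConsistent N d U)
    {W : Finset ℕ} (hW : W ⊆ Finset.Icc 1 N) (hc : W.card = d + 2)
    {x y z : ℕ} (hx : x ∈ W) (hy : y ∈ W) (hz : z ∈ W) (hxy : x < y) (hyz : y < z) :
    (W.erase x ∈ U → W.erase z ∈ U → W.erase y ∈ U) ∧
    (W.erase y ∈ U → W.erase x ∈ U ∨ W.erase z ∈ U) := by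
  obtain ⟨k, -, hcase⟩ := hU W hW hc
  obtain ⟨tx, htx1, htx2, htxe⟩ := exists_nth_eq hx
  obtain ⟨ty, hty1, hty2, htye⟩ := exists_nth_eq hy
  obtain ⟨tz, htz1, htz2, htze⟩ := exists_nth_eq hz
  rw [hc] at htx2 hty2 htz2
  have hcc : W.card = d + 2 := hc
  have htxy : tx < ty := rank_lt htx1 (hcc ▸ htx2) hty1 (hcc ▸ hty2) (by rw [htxe, htye]; exact hxy)
  have htyz : ty < tz := rank_lt hty1 (hcc ▸ hty2) htz1 (hcc ▸ htz2) (by rw [htye, htze]; exact hyz)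
  have hex : W.erase x = hat W tx := by rw [hat_eq, htxe]
  have hey : W.erase y = hat W ty := by rw [hat_eq, htye]
  have hez : W.erase z = hat W tz := by rw [hat_eq, htze]
  rw [hex, hey, hez]
  rcases hcase with h | h
  · rw [h tx htx1 htx2, h ty hty1 hty2, h tz htz1 htz2]
    omega
  · rw [h tx htx1 htx2, h ty hty1 hty2, h tz htz1 htz2]
    omega

end Zaux

namespace Zaux

lemma edge_sdiff_mem {A B : Finset ℕ} {α : ℕ} (h : A \ B = {α}) : α ∈ A ∧ α ∉ B := by
  have : α ∈ A \ B := by rw [h]; exact Finset.mem_singleton_self α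
  exact ⟨(Finset.mem_sdiff.1 this).1, (Finset.mem_sdiff.1 this).2⟩

/-- Key monotonicity: membership in the contraction `Ctr U M` (`M` the largest
relevant element) is preserved along `M`-free edges. -/
lemma ctr_mono {N d : ℕ} {U : Set (Finset ℕ)} (hU : IsConsistent N d U)
    {A B : Finset ℕ} {M : ℕ}
    (hedge : EdgeN N d U A B) (hMAB : M ∉ A ∪ B) (hmax : ∀ a ∈ A ∪ B, a < M)
    (hMIcc : M ∈ Finset.Icc 1 N) (hA : insert M A ∈ U) : insert M B ∈ U := by
  obtain ⟨hcA, hcB, hsub, hcAB, α, β, hα, hβ, hor⟩ := hedge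
  obtain ⟨hαA, hαB⟩ := edge_sdiff_mem hα
  obtain ⟨hβB, hβA⟩ := edge_sdiff_mem hβ
  set W : Finset ℕ := insert M (A ∪ B) with hW
  have hcW : W.card = d + 2 := by
    rw [hW, Finset.card_insert_of_notMem hMAB, hcAB]
  have hsubW : W ⊆ Finset.Icc 1 N := by
    rw [hW]; exact Finset.insert_subset hMIcc hsub
  have hMα : α ≠ M := fun he => hMAB (Finset.mem_union_left _ (he ▸ hαA))
  have hMβ : β ≠ M := fun he => hMAB (Finset.mem_union_right _ (he ▸ hβB))
  have hAeq : A = (A ∪ B).erase β :=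
    eq_erase_of Finset.subset_union_left (by omega) (Finset.mem_union_right _ hβB) hβA
  have hBeq : B = (A ∪ B).erase α :=
    eq_erase_of Finset.subset_union_right (by omega) (Finset.mem_union_left _ hαA) hαB
  have hWβ : W.erase β = insert M A := by
    rw [hW, Finset.erase_insert_of_ne (Ne.symm hMβ), ← hAeq]
  have hWα : W.erase α = insert M B := by
    rw [hW, Finset.erase_insert_of_ne (Ne.symm hMα), ← hBeq]
  have hWM : W.erase M = A ∪ B := by
    rw [hW, Finset.erase_insert hMAB]
  have hαW : α ∈ W := Finset.mem_insert_of_mem (Finset.mem_union_left _ hαA)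
  have hβW : β ∈ W := Finset.mem_insert_of_mem (Finset.mem_union_right _ hβB)
  have hMW : M ∈ W := Finset.mem_insert_self _ _
  have hαM : α < M := hmax _ (Finset.mem_union_left _ hαA)
  have hβM : β < M := hmax _ (Finset.mem_union_right _ hβB)
  have hαβ : α ≠ β := fun he => hαB (he ▸ hβB)
  by_cases h : β < α
  · -- A ∪ B ∈ U, use no101 on (β, α, M)
    have hABU : A ∪ B ∈ U := hor.2 h
    have := (no_pattern hU hsubW hcW hβW hαW hMW h hαM).1
    rw [hWβ, hWα, hWM] at this
    exact this hA hABU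
  · -- A ∪ B ∉ U, use no010 on (α, β, M)
    have hαβ' : α < β := by omega
    have hABU : A ∪ B ∉ U := fun hu => h (hor.1 hu)
    have := (no_pattern hU hsubW hcW hαW hβW hMW hαβ' hβM).2
    rw [hWβ, hWα, hWM] at this
    rcases this hA with h' | h'
    · exact h'
    · exact absurd h' hABU

lemma cross_out {N d : ℕ} {U : Set (Finset ℕ)} {A B : Finset ℕ} {M : ℕ}
    (hedge : EdgeN N d U A B) (hMB : M ∈ B) (hMA : M ∉ A)
    (hmax : ∀ a ∈ A ∪ B, a ≤ M) : insert M A ∉ U := by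
  obtain ⟨hcA, hcB, hsub, hcAB, α, β, hα, hβ, hor⟩ := hedge
  obtain ⟨hαA, hαB⟩ := edge_sdiff_mem hα
  have hMβ : M = β := by
    have : M ∈ B \ A := Finset.mem_sdiff.2 ⟨hMB, hMA⟩
    rw [hβ] at this
    exact Finset.mem_singleton.1 this
  have hαM : α < M := by
    have h1 : α ≤ M := hmax _ (Finset.mem_union_left _ hαA)
    have h2 : α ≠ M := fun he => hMA (he ▸ hαA)
    omega
  have hABU : A ∪ B ∉ U := fun hu => by have := hor.1 hu; omega
  have hins : insert M A = A ∪ B := by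
    apply Finset.eq_of_subset_of_card_le
    · exact Finset.insert_subset (Finset.mem_union_right _ hMB) Finset.subset_union_left
    · rw [Finset.card_insert_of_notMem hMA]; omega
  rw [hins]; exact hABU

lemma cross_in {N d : ℕ} {U : Set (Finset ℕ)} {A B : Finset ℕ} {M : ℕ}
    (hedge : EdgeN N d U A B) (hMA : M ∈ A) (hMB : M ∉ B)
    (hmax : ∀ a ∈ A ∪ B, a ≤ M) : insert M B ∈ U := by
  obtain ⟨hcA, hcB, hsub, hcAB, α, β, hα, hβ, hor⟩ := hedge
  obtain ⟨hβB, hβA⟩ := edge_sdiff_mem hβ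
  have hMα : M = α := by
    have : M ∈ A \ B := Finset.mem_sdiff.2 ⟨hMA, hMB⟩
    rw [hα] at this
    exact Finset.mem_singleton.1 this
  have hβM : β < M := by
    have h1 : β ≤ M := hmax _ (Finset.mem_union_right _ hβB)
    have h2 : β ≠ M := fun he => hMB (he ▸ hβB)
    omega
  have hABU : A ∪ B ∈ U := hor.2 (by omega)
  have hins : insert M B = A ∪ B := by
    apply Finset.eq_of_subset_of_card_le
    · exact Finset.insert_subset (Finset.mem_union_left _ hMA) Finset.subset_union_right
    · rw [Finset.card_insert_of_notMem hMB]; omega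
  rw [hins]; exact hABU

lemma edge_contract {N d : ℕ} {U : Set (Finset ℕ)} {A B : Finset ℕ}
    (hedge : EdgeN (N + 1) (d + 1) U A B) (hMA : (N + 1) ∈ A) (hMB : (N + 1) ∈ B) :
    EdgeN N d (Ctr U (N + 1)) (A.erase (N + 1)) (B.erase (N + 1)) := by
  obtain ⟨hcA, hcB, hsub, hcAB, α, β, hα, hβ, hor⟩ := hedge
  obtain ⟨hαA, hαB⟩ := edge_sdiff_mem hα
  obtain ⟨hβB, hβA⟩ := edge_sdiff_mem hβ
  have hαM : α ≠ N + 1 := fun he => hαB (he ▸ hMB)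
  have hβM : β ≠ N + 1 := fun he => hβA (he ▸ hMA)
  have hMAB : (N + 1) ∈ A ∪ B := Finset.mem_union_left _ hMA
  have huniq : A.erase (N + 1) ∪ B.erase (N + 1) = (A ∪ B).erase (N + 1) :=
    (Finset.erase_union_distrib A B (N + 1)).symm
  have hd1 : A.erase (N + 1) \ B.erase (N + 1) = A \ B := by
    ext a
    simp only [Finset.mem_sdiff, Finset.mem_erase, not_and]
    constructor
    · rintro ⟨⟨haM, haA⟩, h2⟩
      exact ⟨haA, h2 haM⟩
    · rintro ⟨haA, haB⟩
      exact ⟨⟨fun he => haB (he ▸ hMB), haA⟩, fun _ => haB⟩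
  have hd2 : B.erase (N + 1) \ A.erase (N + 1) = B \ A := by
    ext a
    simp only [Finset.mem_sdiff, Finset.mem_erase, not_and]
    constructor
    · rintro ⟨⟨haM, haB⟩, h2⟩
      exact ⟨haB, h2 haM⟩
    · rintro ⟨haB, haA⟩
      exact ⟨⟨fun he => haA (he ▸ hMA), haB⟩, fun _ => haA⟩
  refine ⟨?_, ?_, ?_, ?_, α, β, ?_, ?_, ?_⟩
  · rw [Finset.card_erase_of_mem hMA, hcA]; omega
  · rw [Finset.card_erase_of_mem hMB, hcB]; omega
  · rw [huniq]
    intro a ha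
    have haAB := Finset.mem_of_mem_erase ha
    have hne := Finset.ne_of_mem_erase ha
    have := hsub haAB
    rw [Finset.mem_Icc] at this ⊢
    omega
  · rw [huniq, Finset.card_erase_of_mem hMAB, hcAB]; omega
  · rw [hd1]; exact hα
  · rw [hd2]; exact hβ
  · rw [huniq]
    show insert (N + 1) ((A ∪ B).erase (N + 1)) ∈ U ↔ β < α
    rw [Finset.insert_erase hMAB]
    exact hor

lemma del_consistent {N d : ℕ} {U : Set (Finset ℕ)} (hU : IsConsistent (N + 1) d U) :
    IsConsistent N d U := fun s hs hc =>
  hU s (hs.trans (Finset.Icc_subset_Icc le_rfl (by omega))) hc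

lemma edge_del {N d : ℕ} {U : Set (Finset ℕ)} {A B : Finset ℕ}
    (hedge : EdgeN (N + 1) d U A B) (hMA : (N + 1) ∉ A) (hMB : (N + 1) ∉ B) :
    EdgeN N d U A B := by
  obtain ⟨hcA, hcB, hsub, hcAB, hrest⟩ := hedge
  refine ⟨hcA, hcB, ?_, hcAB, hrest⟩
  intro a ha
  have := hsub ha
  rw [Finset.mem_Icc] at this ⊢
  have haM : a ≠ N + 1 := by
    rintro rfl
    rcases Finset.mem_union.1 ha with h | h
    · exact hMA h
    · exact hMB h
  omega

lemma ctr_consistent {N d : ℕ} {U : Set (Finset ℕ)} (hU : IsConsistent (N + 1) (d + 1) U) :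
    IsConsistent N d (Ctr U (N + 1)) := by
  intro s hs hcard
  have hmax : ∀ x ∈ s, x < N + 1 := by
    intro x hx
    have := hs hx
    rw [Finset.mem_Icc] at this
    omega
  have hnot : (N + 1) ∉ s := fun h => lt_irrefl _ (hmax _ h)
  set s' : Finset ℕ := insert (N + 1) s with hs'def
  have hcard' : s'.card = (d + 1) + 2 := by
    rw [hs'def, Finset.card_insert_of_notMem hnot, hcard]
  have hs' : s' ⊆ Finset.Icc 1 (N + 1) := by
    rw [hs'def]
    refine Finset.insert_subset (Finset.mem_Icc.2 ⟨by omega, le_rfl⟩) ?_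
    exact hs.trans (Finset.Icc_subset_Icc le_rfl (by omega))
  obtain ⟨k, hk, hcase⟩ := hU s' hs' hcard'
  have hhat : ∀ t, 1 ≤ t → t ≤ d + 2 → (hat s t ∈ Ctr U (N + 1) ↔ hat s' t ∈ U) := by
    intro t h1 h2
    have hnth : nth s' t = nth s t := nth_insert_max hmax h1 (by omega)
    have hv : nth s t ∈ s := nth_mem h1 (by omega)
    have hvne : (N + 1) ≠ nth s t := fun he => hnot (he ▸ hv)
    rw [hat_eq, hat_eq, hnth, hs'def, Finset.erase_insert_of_ne hvne]
    exact Iff.rfl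
  by_cases hbig : k ≤ d + 2
  · refine ⟨k, hbig, ?_⟩
    rcases hcase with h | h
    · refine Or.inl fun t h1 h2 => ?_
      rw [hhat t h1 h2, h t h1 (by omega)]
    · refine Or.inr fun t h1 h2 => ?_
      rw [hhat t h1 h2, h t h1 (by omega)]
  · rcases hcase with h | h
    · refine ⟨d + 2, le_rfl, Or.inl fun t h1 h2 => ?_⟩
      rw [hhat t h1 h2, h t h1 (by omega)]
      omega
    · refine ⟨0, by omega, Or.inl fun t h1 h2 => ?_⟩
      rw [hhat t h1 h2, h t h1 (by omega)]
      omega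

end Zaux

namespace Zaux

/-- The central acyclicity result: the digraph of a consistent set has no closed walk. -/
theorem noWalk : ∀ N d : ℕ, ∀ U : Set (Finset ℕ), IsConsistent N d U →
    ∀ (m : ℕ) (f : ℕ → Finset ℕ), 0 < m → (∀ i < m, EdgeN N d U (f i) (f (i + 1))) →
    f 0 = f m → False := by
  intro N
  induction N with
  | zero =>
    intro d U _ m f hm hedge _
    obtain ⟨-, -, hsub, -, α, β, hα, -, -⟩ := hedge 0 hm
    have hαm : α ∈ f 0 ∪ f 1 := Finset.mem_union_left _ (edge_sdiff_mem hα).1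
    have := hsub hαm
    rw [Finset.mem_Icc] at this
    omega
  | succ N IH =>
    intro d U hU m f hm hedge hclose
    by_cases hex : ∃ i ≤ m, (N + 1) ∈ f i
    · by_cases hall : ∀ i ≤ m, (N + 1) ∈ f i
      · -- all vertices contain N+1 : contract
        match d with
        | 0 =>
          obtain ⟨hc0, -, -, -, -⟩ := hedge 0 hm
          have : f 0 = ∅ := Finset.card_eq_zero.1 hc0
          exact absurd (hall 0 (by omega)) (by rw [this]; exact Finset.notMem_empty _)
        | d + 1 =>
          exact IH d (Ctr U (N + 1)) (ctr_consistent hU) m (fun i => (f i).erase (N + 1)) hm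
            (fun i hi => edge_contract (hedge i hi) (hall i (le_of_lt hi)) (hall (i + 1) hi))
            (by show (f 0).erase (N + 1) = (f m).erase (N + 1); rw [hclose])
      · -- mixed case: use the monotone potential ρ
        push_neg at hall
        obtain ⟨i0, hi0m, hi0⟩ := hall
        obtain ⟨a, ham, haM⟩ := hex
        classical
        set ρ : Finset ℕ → ℕ :=
          fun S => if (N + 1) ∈ S then 1 else if insert (N + 1) S ∈ U then 2 else 0 with hρ
        have hmaxle : ∀ i < m, ∀ x ∈ f i ∪ f (i + 1), x ≤ N + 1 := by
          intro i hi x hx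
          obtain ⟨-, -, hsub, -, -⟩ := hedge i hi
          have := hsub hx
          rw [Finset.mem_Icc] at this
          omega
        have hstep : ∀ i < m, ρ (f i) ≤ ρ (f (i + 1)) := by
          intro i hi
          by_cases hA : (N + 1) ∈ f i <;> by_cases hB : (N + 1) ∈ f (i + 1)
          · simp [hρ, hA, hB]
          · -- leaves N+1 : target contraction member
            have := cross_in (hedge i hi) hA hB (hmaxle i hi)
            simp [hρ, hA, hB, this]
          · -- enters N+1 : source not contraction member
            have := cross_out (hedge i hi) hB hA (hmaxle i hi)
            simp [hρ, hA, hB, this]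
          · -- N+1-free edge : use monotonicity of contraction membership
            simp only [hρ, if_neg hA, if_neg hB]
            by_cases hctr : insert (N + 1) (f i) ∈ U
            · have hMAB : (N + 1) ∉ f i ∪ f (i + 1) := by
                rw [Finset.mem_union]
                rintro (h | h)
                · exact hA h
                · exact hB h
              have hmax' : ∀ x ∈ f i ∪ f (i + 1), x < N + 1 := by
                intro x hx
                have h1 := hmaxle i hi x hx
                have h2 : x ≠ N + 1 := fun he => hMAB (he ▸ hx)
                omega
              have := ctr_mono hU (hedge i hi) hMAB hmax'
                (Finset.mem_Icc.2 ⟨by omega, le_rfl⟩) hctr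
              simp [hctr, this]
            · rw [if_neg hctr]
              exact Nat.zero_le _
        have hstrict : ∃ i < m, ρ (f i) < ρ (f (i + 1)) := by
          -- there is an edge where membership of N+1 flips
          have hdiff : ∃ i < m, ¬(((N + 1) ∈ f i) ↔ ((N + 1) ∈ f (i + 1))) := by
            by_contra hcon
            push_neg at hcon
            have hconst : ∀ i ≤ m, ((N + 1) ∈ f i ↔ (N + 1) ∈ f 0) := by
              intro i
              induction i with
              | zero => intro _; exact Iff.rfl
              | succ j ihj =>
                intro hj
                have h1 := hcon j (by omega)
                have h2 := ihj (by omega)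
                exact h1.symm.trans h2
            have h1 := (hconst a ham).1 haM
            exact hi0 ((hconst i0 hi0m).2 h1)
          obtain ⟨i, hi, hflip⟩ := hdiff
          refine ⟨i, hi, ?_⟩
          by_cases hA : (N + 1) ∈ f i <;> by_cases hB : (N + 1) ∈ f (i + 1)
          · exact absurd (iff_of_true hA hB) hflip
          · have := cross_in (hedge i hi) hA hB (hmaxle i hi)
            simp [hρ, hA, hB, this]
          · have := cross_out (hedge i hi) hB hA (hmaxle i hi)
            simp [hρ, hA, hB, this]
          · exact absurd (iff_of_false hA hB) hflip
        have hmono : ∀ j, j ≤ m → ∀ i, i ≤ j → ρ (f i) ≤ ρ (f j) := by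
          intro j
          induction j with
          | zero =>
            intro _ i hi
            have hi0' : i = 0 := by omega
            rw [hi0']
          | succ j ihj =>
            intro hjm i hij
            rcases Nat.lt_or_ge i (j + 1) with h | h
            · exact le_trans (ihj (by omega) i (by omega)) (hstep j (by omega))
            · have hieq : i = j + 1 := by omega
              rw [hieq]
        obtain ⟨i, hi, hlt⟩ := hstrict
        have h1 : ρ (f 0) ≤ ρ (f i) := hmono i (by omega) 0 (by omega)
        have h2 : ρ (f (i + 1)) ≤ ρ (f m) := hmono m le_rfl (i + 1) (by omega)
        rw [← hclose] at h2
        omega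
    · -- no vertex contains N+1 : delete
      push_neg at hex
      exact IH d U (del_consistent hU) m f hm
        (fun i hi => edge_del (hedge i hi) (hex i (le_of_lt hi)) (hex (i + 1) hi)) hclose

end Zaux

namespace Zaux

lemma transgen_walk {E : Finset ℕ → Finset ℕ → Prop} {A B : Finset ℕ}
    (h : Relation.TransGen E A B) :
    ∃ m, 0 < m ∧ ∃ f : ℕ → Finset ℕ, f 0 = A ∧ f m = B ∧ ∀ i < m, E (f i) (f (i + 1)) := by
  induction h with
  | @single b hb =>
    refine ⟨1, one_pos, fun i => if i = 0 then A else b, by simp, by simp, ?_⟩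
    intro i hi
    have : i = 0 := by omega
    subst this
    simpa using hb
  | @tail b c hab hbc ih =>
    obtain ⟨m, hm, f, h0, hm', hstep⟩ := ih
    refine ⟨m + 1, by omega, fun i => if i = m + 1 then c else f i, ?_, by simp, ?_⟩
    · simp only [if_neg (by omega : ¬ (0 = m + 1))]; exact h0
    · intro i hi
      by_cases him : i = m
      · have hc1 : ¬ (i = m + 1) := by omega
        have hc2 : i + 1 = m + 1 := by omega
        simp only [if_neg hc1, if_pos hc2]
        rw [him, hm']
        exact hbc
      · simp only [if_neg (by omega : ¬ (i = m + 1)), if_neg (by omega : ¬ (i + 1 = m + 1))]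
        exact hstep i (by omega)

/-- the hard direction: a consistent set is the inversion set of an admissible order. -/
theorem hard_direction (n d : ℕ) (hd : 1 ≤ d) (I : Set (Finset ℕ))
    (hI : ∀ s ∈ I, s ⊆ Finset.Icc 1 n ∧ s.card = d + 1)
    (hcons : IsConsistent n d I) :
    ∃ r : Finset ℕ → Finset ℕ → Prop, IsAdmissible n d r ∧ I = invOrder n d r := by
  classical
  set E : Finset ℕ → Finset ℕ → Prop := EdgeN n d I with hE
  set R : Finset ℕ → Finset ℕ → Prop := Relation.TransGen E with hR
  have hirr : ∀ S, ¬ R S S := by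
    intro S hRS
    obtain ⟨m, hm, f, h0, hm', hstep⟩ := transgen_walk hRS
    exact noWalk n d I hcons m f hm hstep (h0.trans hm'.symm)
  set rle : Finset ℕ → Finset ℕ → Prop := fun A B => R A B ∨ A = B with hrle
  haveI hpo : IsPartialOrder (Finset ℕ) rle :=
    { refl := fun a => Or.inr rfl
      trans := by
        rintro a b c (hab | rfl) (hbc | rfl)
        · exact Or.inl (hab.trans hbc)
        · exact Or.inl hab
        · exact Or.inl hbc
        · exact Or.inr rfl
      antisymm := by
        rintro a b (hab | rfl) (hba | he)
        · exact absurd (hab.trans hba) (hirr a)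
        · exact he.symm
        · rfl
        · rfl }
  obtain ⟨sle, hlin, hsub⟩ := extend_partialOrder rle
  haveI := hlin
  set r : Finset ℕ → Finset ℕ → Prop := fun A B => sle A B ∧ A ≠ B with hr
  have hedge_r : ∀ A B, E A B → r A B := by
    intro A B hAB
    exact ⟨hsub _ _ (Or.inl (Relation.TransGen.single hAB)), edge_ne hAB⟩
  have hlinon : IsLinOrderOn {s | s ⊆ Finset.Icc 1 n ∧ s.card = d} r := by
    refine ⟨fun a _ h => h.2 rfl, ?_, ?_⟩
    · rintro a _ b _ c _ ⟨hab, hne⟩ ⟨hbc, hne'⟩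
      refine ⟨Trans.trans hab hbc, fun he => ?_⟩
      subst he
      exact hne (Std.Antisymm.antisymm _ _ hab hbc)
    · intro a _ b _ hne
      rcases Std.Total.total (r := sle) a b with h | h
      · exact Or.inl ⟨h, hne⟩
      · exact Or.inr ⟨h, Ne.symm hne⟩
  -- packets of members of I are antilex, others lex
  have hpacket_anti : ∀ s : Finset ℕ, s ⊆ Finset.Icc 1 n → s.card = d + 1 → s ∈ I →
      PacketAntilex d r s := by
    intro s hsub' hcard hsI t t' h1 htt' ht'
    have hx : nth s t ∈ s := nth_mem h1 (by omega)
    have hy : nth s t' ∈ s := nth_mem (by omega) (by omega)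
    have hxy : nth s t < nth s t' := nth_lt_nth h1 htt' (by omega)
    rw [hat_eq, hat_eq]
    exact hedge_r _ _ ((edge_packet_iff hsub' hcard hx hy (by omega)).2
      (iff_of_true hsI hxy))
  have hpacket_lex : ∀ s : Finset ℕ, s ⊆ Finset.Icc 1 n → s.card = d + 1 → s ∉ I →
      PacketLex d r s := by
    intro s hsub' hcard hsI t t' h1 htt' ht'
    have hx : nth s t ∈ s := nth_mem h1 (by omega)
    have hy : nth s t' ∈ s := nth_mem (by omega) (by omega)
    have hxy : nth s t < nth s t' := nth_lt_nth h1 htt' (by omega)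
    rw [hat_eq, hat_eq]
    exact hedge_r _ _ ((edge_packet_iff hsub' hcard hy hx (by omega)).2
      (iff_of_false hsI (by omega)))
  refine ⟨r, ⟨hlinon, ?_⟩, ?_⟩
  · intro s hsub' hcard
    by_cases hsI : s ∈ I
    · exact Or.inr (hpacket_anti s hsub' hcard hsI)
    · exact Or.inl (hpacket_lex s hsub' hcard hsI)
  · apply Set.eq_of_subset_of_subset
    · intro s hs
      exact ⟨(hI s hs).1, (hI s hs).2, hpacket_anti s (hI s hs).1 (hI s hs).2 hs⟩
    · rintro s ⟨hsub', hcard, hanti⟩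
      by_contra hsI
      have hlex := hpacket_lex s hsub' hcard hsI
      have h1 := hanti 1 2 le_rfl one_lt_two (by omega)
      have h2 := hlex 1 2 le_rfl one_lt_two (by omega)
      exact h1.2 (Std.Antisymm.antisymm _ _ h1.1 h2.1)

/-- booleans on `[1,m]` with no 010- and no 101-patterns form an initial or final interval. -/
lemma interval_form (m : ℕ) (f : ℕ → Prop)
    (h101 : ∀ t1 t2 t3, 1 ≤ t1 → t1 < t2 → t2 < t3 → t3 ≤ m → f t1 → f t3 → f t2)
    (h010 : ∀ t1 t2 t3, 1 ≤ t1 → t1 < t2 → t2 < t3 → t3 ≤ m → f t2 → f t1 ∨ f t3) :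
    ∃ k ≤ m, (∀ t, 1 ≤ t → t ≤ m → (f t ↔ t ≤ k)) ∨ (∀ t, 1 ≤ t → t ≤ m → (f t ↔ k ≤ t)) := by
  classical
  by_cases hall0 : ∀ t, 1 ≤ t → t ≤ m → ¬ f t
  · exact ⟨0, Nat.zero_le m, Or.inl fun t h1 h2 => iff_of_false (hall0 t h1 h2) (by omega)⟩
  push_neg at hall0
  obtain ⟨t0, ht01, ht0m, hft0⟩ := hall0
  by_cases hf1 : f 1
  · -- downward closed
    have hdc : ∀ a b, 1 ≤ b → b ≤ a → a ≤ m → f a → f b := by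
      intro a b h1 hba ham hfa
      rcases Nat.lt_or_ge b a with h | h
      · rcases Nat.lt_or_ge 1 b with h' | h'
        · exact h101 1 b a (le_refl 1) h' h ham hf1 hfa
        · have : b = 1 := by omega
          rw [this]; exact hf1
      · have : b = a := by omega
        rw [this]; exact hfa
    set P : ℕ → Prop := fun t => 1 ≤ t ∧ f t with hP
    set k : ℕ := Nat.findGreatest P m with hk
    have hPt0 : P t0 := ⟨ht01, hft0⟩
    have hPk : P k := Nat.findGreatest_spec ht0m hPt0
    refine ⟨k, Nat.findGreatest_le m, Or.inl fun t h1 h2 => ?_⟩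
    constructor
    · intro hft
      exact Nat.le_findGreatest h2 ⟨h1, hft⟩
    · intro htk
      exact hdc k t h1 htk (Nat.findGreatest_le m) hPk.2
  · -- f 1 false: upward closed
    have hfm : f m := by
      by_contra hfm
      rcases Nat.lt_or_ge 1 t0 with h' | h'
      · rcases Nat.lt_or_ge t0 m with h'' | h''
        · rcases h010 1 t0 m (le_refl 1) h' h'' (le_refl m) hft0 with h | h
          · exact hf1 h
          · exact hfm h
        · have : t0 = m := by omega
          exact hfm (this ▸ hft0)
      · have : t0 = 1 := by omega
        exact hf1 (this ▸ hft0)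
    have huc : ∀ a b, 1 ≤ a → a ≤ b → b ≤ m → f a → f b := by
      intro a b h1 hab hbm hfa
      rcases Nat.lt_or_ge a b with h | h
      · rcases Nat.lt_or_ge b m with h' | h'
        · exact h101 a b m h1 h h' (le_refl m) hfa hfm
        · have : b = m := by omega
          rw [this]; exact hfm
      · have : b = a := by omega
        rw [this]; exact hfa
    have hex : ∃ t, 1 ≤ t ∧ f t := ⟨t0, ht01, hft0⟩
    set k : ℕ := Nat.find hex with hk
    obtain ⟨hk1, hfk⟩ := Nat.find_spec hex
    have hkt0 : k ≤ t0 := Nat.find_min' hex ⟨ht01, hft0⟩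
    refine ⟨k, by omega, Or.inr fun t h1 h2 => ?_⟩
    constructor
    · intro hft
      exact Nat.find_min' hex ⟨h1, hft⟩
    · intro hkt
      exact huc k t hk1 hkt h2 hfk

/-- the easy direction: inversion sets of admissible orders are consistent. -/
theorem easy_direction (n d : ℕ) (I : Set (Finset ℕ)) (r : Finset ℕ → Finset ℕ → Prop)
    (hadm : IsAdmissible n d r) (hinv : I = invOrder n d r) : IsConsistent n d I := by
  obtain ⟨⟨hirr, htrans, -⟩, hpacket⟩ := hadm
  intro W hW hcard
  -- membership facts
  have hmem : ∀ z ∈ W, (W.erase z ∈ I ↔ PacketAntilex d r (W.erase z)) := by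
    intro z hz
    rw [hinv]
    constructor
    · rintro ⟨-, -, h⟩; exact h
    · intro h
      exact ⟨(Finset.erase_subset _ _).trans hW,
        by rw [Finset.card_erase_of_mem hz, hcard]; omega, h⟩
  have hlexof : ∀ z ∈ W, W.erase z ∉ I → PacketLex d r (W.erase z) := by
    intro z hz hnI
    have hsub' : W.erase z ⊆ Finset.Icc 1 n := (Finset.erase_subset _ _).trans hW
    have hcard' : (W.erase z).card = d + 1 := by
      rw [Finset.card_erase_of_mem hz, hcard]
      omega
    rcases hpacket _ hsub' hcard' with h | h
    · exact h
    · exact absurd ((hmem z hz).2 h) hnI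
  -- the pair facts : for u < v in W.erase z
  have hpair : ∀ z ∈ W, ∀ u ∈ W, ∀ v ∈ W, u ≠ z → v ≠ z → u < v →
      (W.erase z ∈ I → r ((W.erase z).erase u) ((W.erase z).erase v)) ∧
      (W.erase z ∉ I → r ((W.erase z).erase v) ((W.erase z).erase u)) := by
    intro z hz u hu v hv huz hvz huv
    have hu' : u ∈ W.erase z := Finset.mem_erase.2 ⟨huz, hu⟩
    have hv' : v ∈ W.erase z := Finset.mem_erase.2 ⟨hvz, hv⟩
    have hcard' : (W.erase z).card = d + 1 := by
      rw [Finset.card_erase_of_mem hz, hcard]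
      omega
    obtain ⟨p, hp1, hp2, hpe⟩ := exists_nth_eq hu'
    obtain ⟨q, hq1, hq2, hqe⟩ := exists_nth_eq hv'
    rw [hcard'] at hp2 hq2
    have hpq : p < q := rank_lt hp1 (hcard' ▸ hp2) hq1 (hcard' ▸ hq2)
      (by rw [hpe, hqe]; exact huv)
    have he1 : (W.erase z).erase u = hat (W.erase z) p := by rw [hat_eq, hpe]
    have he2 : (W.erase z).erase v = hat (W.erase z) q := by rw [hat_eq, hqe]
    constructor
    · intro hIx
      rw [he1, he2]
      exact ((hmem z hz).1 hIx) p q hp1 hpq hq2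
    · intro hnI
      rw [he1, he2]
      exact (hlexof z hz hnI) p q hp1 hpq hq2
  -- domain membership of the double erasures
  have hdom : ∀ z ∈ W, ∀ u ∈ W, u ≠ z →
      (W.erase z).erase u ∈ {s : Finset ℕ | s ⊆ Finset.Icc 1 n ∧ s.card = d} := by
    intro z hz u hu huz
    refine ⟨(Finset.erase_subset _ _).trans ((Finset.erase_subset _ _).trans hW), ?_⟩
    rw [Finset.card_erase_of_mem (Finset.mem_erase.2 ⟨huz, hu⟩),
      Finset.card_erase_of_mem hz, hcard]
    omega
  -- no-pattern facts in position form
  have key : ∀ t1 t2 t3, 1 ≤ t1 → t1 < t2 → t2 < t3 → t3 ≤ d + 2 →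
      ((hat W t1 ∈ I → hat W t3 ∈ I → hat W t2 ∈ I) ∧
       (hat W t2 ∈ I → hat W t1 ∈ I ∨ hat W t3 ∈ I)) := by
    intro t1 t2 t3 h1 h12 h23 h3
    set x : ℕ := nth W t1 with hxd
    set y : ℕ := nth W t2 with hyd
    set z : ℕ := nth W t3 with hzd
    have hx : x ∈ W := nth_mem h1 (by omega)
    have hy : y ∈ W := nth_mem (by omega) (by omega)
    have hz : z ∈ W := nth_mem (by omega) (by omega)
    have hxy : x < y := nth_lt_nth h1 h12 (by omega)
    have hyz : y < z := nth_lt_nth (by omega) h23 (by omega)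
    have hhx : hat W t1 = W.erase x := rfl
    have hhy : hat W t2 = W.erase y := rfl
    have hhz : hat W t3 = W.erase z := rfl
    rw [hhx, hhy, hhz]
    have hdA2 := hdom z hz y hy (by omega)
    have hdB2 := hdom z hz x hx (by omega)
    have hdC2 := hdom y hy x hx (by omega)
    constructor
    · -- no101
      intro hε1 hε3
      by_contra hε2
      have f1 : r ((W.erase z).erase x) ((W.erase z).erase y) :=
        (hpair z hz x hx y hy (by omega) (by omega) hxy).1 hε3
      have f2 : r ((W.erase x).erase y) ((W.erase x).erase z) :=
        (hpair x hx y hy z hz (by omega) (by omega) hyz).1 hε1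
      have f3 : r ((W.erase y).erase z) ((W.erase y).erase x) :=
        (hpair y hy x hx z hz (by omega) (by omega) (by omega)).2 hε2
      rw [erase_erase_comm W x y, erase_erase_comm W x z] at f2
      rw [erase_erase_comm W y z] at f3
      have hca : r ((W.erase y).erase x) ((W.erase z).erase y) :=
        htrans _ hdC2 _ hdB2 _ hdA2 f2 f1
      have : r ((W.erase z).erase y) ((W.erase z).erase y) :=
        htrans _ hdA2 _ hdC2 _ hdA2 f3 hca
      exact hirr _ hdA2 this
    · -- no010
      intro hε2
      by_contra hcon
      push_neg at hcon
      obtain ⟨hε1, hε3⟩ := hcon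
      have f1 : r ((W.erase z).erase y) ((W.erase z).erase x) :=
        (hpair z hz x hx y hy (by omega) (by omega) hxy).2 hε3
      have f2 : r ((W.erase y).erase x) ((W.erase y).erase z) :=
        (hpair y hy x hx z hz (by omega) (by omega) (by omega)).1 hε2
      have f3 : r ((W.erase x).erase z) ((W.erase x).erase y) :=
        (hpair x hx y hy z hz (by omega) (by omega) hyz).2 hε1
      rw [erase_erase_comm W y z] at f2
      rw [erase_erase_comm W x z, erase_erase_comm W x y] at f3
      have hab : r ((W.erase z).erase y) ((W.erase y).erase x) :=
        htrans _ hdA2 _ hdB2 _ hdC2 f1 f3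
      have : r ((W.erase z).erase y) ((W.erase z).erase y) :=
        htrans _ hdA2 _ hdC2 _ hdA2 hab f2
      exact hirr _ hdA2 this
  exact interval_form (d + 2) (fun t => hat W t ∈ I)
    (fun t1 t2 t3 a b c e => (key t1 t2 t3 a b c e).1)
    (fun t1 t2 t3 a b c e => (key t1 t2 t3 a b c e).2)

end Zaux


/-- (Ziegler) A set `I` of `(d+1)`-element subsets of `[n]` is the inversion set of some
admissible linear order on the `d`-element subsets of `[n]` iff `I` is consistent. -/
theorem ziegler_criterion (n d : ℕ) (hd : 1 ≤ d) (hdn : d ≤ n)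
    (I : Set (Finset ℕ)) (hI : ∀ s ∈ I, s ⊆ Finset.Icc 1 n ∧ s.card = d + 1) :
    (∃ r : Finset ℕ → Finset ℕ → Prop, IsAdmissible n d r ∧ I = invOrder n d r) ↔
    IsConsistent n d I := by
  constructor
  · rintro ⟨r, hadm, hinv⟩
    exact Zaux.easy_direction n d I r hadm hinv
  · intro hcons
    exact Zaux.hard_direction n d hd I hI hcons
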